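/- (Correa–Seeger min-sup differentiability theorem, Theorem 8.1.) Let X and Y be real Banach spaces, ε > 0, and G : [0,ε] × X × Y → ℝ. For t ∈ [0,ε] define g(t) = inf_{x∈X} sup_{y∈Y} G(t,x,y) and h(t) = sup_{y∈Y} inf_{x∈X} G(t,x,y) (in the extended reals), and the sets X(t) = {x ∈ X : sup_{y∈Y} G(t,x,y) = g(t)} and Y(t) = {y ∈ Y : inf_{x∈X} G(t,x,y) = h(t)}; when h(t) = g(t), the set of saddle points is S(t) = X(t) × Y(t). Assume: (H1) S(t) is nonempty for every t ∈ [0,ε] (in particular h(t) = g(t) is finite); (H2) the partial derivative ∂_t G(t,x,y) exists for all (t,x,y) ∈ [0,ε] × X × Y; (H3) for every sequence t_n → 0 in (0,ε] there exist a subsequence (t_{n_k}), an element x⁰ ∈ X(0), and elements x_{n_k} ∈ X(t_{n_k}), such that for every y ∈ Y(0) one has ∂_t G(t, x_{n_k}, y) → ∂_t G(0, x⁰, y) in the joint limit t ↘ 0, k → ∞; (H4) for every sequence t_n → 0 in (0,ε] there exist a subsequence (t_{n_k}), an element y⁰ ∈ Y(0), and elements y_{n_k} ∈ Y(t_{n_k}),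 such that for every x ∈ X(0) one has ∂_t G(t, x, y_{n_k}) → ∂_t G(0, x, y⁰) in the joint limit t ↘ 0, k → ∞. Then there exists a saddle point (x⁰, y⁰) ∈ X(0) × Y(0) such that the one-sided derivative of g at t = 0 exists and equals ∂_t G(0, x⁰, y⁰). -/

import Mathlib

open Set Filter

/-- Correa–Seeger min-sup differentiability theorem (Theorem 8.1): under the
saddle-point assumption (H1), existence of the partial derivative `∂_t G` (H2),
and the joint-limit continuity assumptions (H3), (H4), there is a saddle point
`(x⁰, y⁰) ∈ X(0) × Y(0)` such that the one-sided derivative of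
`g(t) = inf_x sup_y G(t,x,y)` at `t = 0` exists and equals `∂_t G(0, x⁰, y⁰)`. -/
theorem correa_seeger_min_sup_differentiability
    {X Y : Type*}
    [NormedAddCommGroup X] [NormedSpace ℝ X] [CompleteSpace X]
    [NormedAddCommGroup Y] [NormedSpace ℝ Y] [CompleteSpace Y]
    (ε : ℝ) (hε : 0 < ε)
    (G : ℝ → X → Y → ℝ)
    (g h : ℝ → EReal)
    (hg : ∀ t, g t = ⨅ x : X, ⨆ y : Y, (G t x y : EReal))
    (hh : ∀ t, h t = ⨆ y : Y, ⨅ x : X, (G t x y : EReal))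
    (Xt : ℝ → Set X) (Yt : ℝ → Set Y)
    (hXt : ∀ t, Xt t = {x : X | (⨆ y : Y, (G t x y : EReal)) = g t})
    (hYt : ∀ t, Yt t = {y : Y | (⨅ x : X, (G t x y : EReal)) = h t})
    -- (H1): the set of saddle points S(t) = X(t) × Y(t) is nonempty for 0 ≤ t ≤ ε
    -- (in particular h(t) = g(t) is finite)
    (H1 : ∀ t ∈ Icc 0 ε,
      h t = g t ∧ (Xt t).Nonempty ∧ (Yt t).Nonempty ∧ g t ≠ ⊤ ∧ g t ≠ ⊥)
    -- (H2): the partial derivative ∂ₜG(t,x,y) exists for all (t,x,y) ∈ [0,ε] × X × Y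
    (Gt : ℝ → X → Y → ℝ)
    (H2 : ∀ t ∈ Icc 0 ε, ∀ (x : X) (y : Y),
      HasDerivWithinAt (fun s => G s x y) (Gt t x y) (Icc 0 ε) t)
    -- (H3)
    (H3 : ∀ tn : ℕ → ℝ, (∀ n, tn n ∈ Ioc 0 ε) → Tendsto tn atTop (nhds 0) →
      ∃ φ : ℕ → ℕ, StrictMono φ ∧ ∃ x0 ∈ Xt 0, ∃ xk : ℕ → X,
        (∀ k, xk k ∈ Xt (tn (φ k))) ∧
        ∀ y ∈ Yt 0, ∀ η > (0 : ℝ), ∃ δ > (0 : ℝ), ∃ N : ℕ,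
          ∀ (t : ℝ) (k : ℕ), 0 < t → t < δ → N < k →
            |Gt t (xk k) y - Gt 0 x0 y| < η)
    -- (H4)
    (H4 : ∀ tn : ℕ → ℝ, (∀ n, tn n ∈ Ioc 0 ε) → Tendsto tn atTop (nhds 0) →
      ∃ φ : ℕ → ℕ, StrictMono φ ∧ ∃ y0 ∈ Yt 0, ∃ yk : ℕ → Y,
        (∀ k, yk k ∈ Yt (tn (φ k))) ∧
        ∀ x ∈ Xt 0, ∀ η > (0 : ℝ), ∃ δ > (0 : ℝ), ∃ N : ℕ,
          ∀ (t : ℝ) (k : ℕ), 0 < t → t < δ → N < k →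
            |Gt t x (yk k) - Gt 0 x y0| < η) :
    ∃ x0 ∈ Xt 0, ∃ y0 ∈ Yt 0,
      Tendsto (fun t => ((g t).toReal - (g 0).toReal) / t)
        (nhdsWithin 0 (Ioc 0 ε)) (nhds (Gt 0 x0 y0)) := by
  classical
  set F := nhdsWithin (0:ℝ) (Ioc 0 ε) with hF
  have hFne : F.NeBot := by
    rw [hF, ← mem_closure_iff_nhdsWithin_neBot, closure_Ioc hε.ne]
    exact ⟨le_refl 0, hε.le⟩
  set q : ℝ → ℝ := fun t => ((g t).toReal - (g 0).toReal) / t with hq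
  have h0mem : (0:ℝ) ∈ Icc 0 ε := ⟨le_refl 0, hε.le⟩
  obtain ⟨hh0, ⟨xbar, hxbar⟩, ⟨ybar, hybar⟩, hg0top, hg0bot⟩ := H1 0 h0mem
  -- Mean value theorem step
  have mvt : ∀ t ∈ Ioc (0:ℝ) ε, ∀ (x : X) (y : Y),
      ∃ τ ∈ Ioo (0:ℝ) t, G t x y - G 0 x y = Gt τ x y * t := by
    intro t ht x y
    have hsub : Icc (0:ℝ) t ⊆ Icc 0 ε := Icc_subset_Icc le_rfl ht.2
    have hcont : ContinuousOn (fun s => G s x y) (Icc 0 t) := fun s hs =>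
      ((H2 s (hsub hs) x y).continuousWithinAt).mono hsub
    have hderiv : ∀ s ∈ Ioo (0:ℝ) t, HasDerivAt (fun u => G u x y) (Gt s x y) s := by
      intro s hs
      have hsI : s ∈ Icc (0:ℝ) ε := ⟨hs.1.le, hs.2.le.trans ht.2⟩
      exact (H2 s hsI x y).hasDerivAt
        (Icc_mem_nhds hs.1 (lt_of_lt_of_le hs.2 ht.2))
    obtain ⟨τ, hτ, hslope⟩ :=
      exists_hasDerivAt_eq_slope (fun s => G s x y) (fun s => Gt s x y) ht.1 hcont hderiv
    refine ⟨τ, hτ, ?_⟩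
    rw [hslope, sub_zero, div_mul_cancel₀ _ (ne_of_gt ht.1)]
  -- Key upper inequality
  have key_upper : ∀ x ∈ Xt 0, ∀ t ∈ Ioc (0:ℝ) ε, ∀ y' ∈ Yt t,
      (g t).toReal - (g 0).toReal ≤ G t x y' - G 0 x y' := by
    intro x hx t ht y' hy'
    have htI : t ∈ Icc (0:ℝ) ε := ⟨ht.1.le, ht.2⟩
    obtain ⟨hht, _, _, hgtop, hgbot⟩ := H1 t htI
    rw [hYt] at hy'
    rw [hXt] at hx
    have h1 : g t ≤ (G t x y' : EReal) := by
      calc g t = h t := hht.symm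
        _ = ⨅ x' : X, (G t x' y' : EReal) := hy'.symm
        _ ≤ (G t x y' : EReal) := iInf_le _ x
    have h2 : (G 0 x y' : EReal) ≤ g 0 := by
      calc (G 0 x y' : EReal) ≤ ⨆ y'' : Y, (G 0 x y'' : EReal) := le_iSup (fun y'' : Y => (G 0 x y'' : EReal)) y'
        _ = g 0 := hx
    have h1' : (g t).toReal ≤ G t x y' := by
      have := EReal.toReal_le_toReal h1 hgbot (EReal.coe_ne_top _)
      simpa using this
    have h2' : G 0 x y' ≤ (g 0).toReal := by
      have := EReal.toReal_le_toReal h2 (EReal.coe_ne_bot _) hg0top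
      simpa using this
    linarith
  -- Key lower inequality
  have key_lower : ∀ y ∈ Yt 0, ∀ t ∈ Ioc (0:ℝ) ε, ∀ x' ∈ Xt t,
      G t x' y - G 0 x' y ≤ (g t).toReal - (g 0).toReal := by
    intro y hy t ht x' hx'
    have htI : t ∈ Icc (0:ℝ) ε := ⟨ht.1.le, ht.2⟩
    obtain ⟨hht, _, _, hgtop, hgbot⟩ := H1 t htI
    rw [hYt] at hy
    rw [hXt] at hx'
    have h1 : (G t x' y : EReal) ≤ g t := by
      calc (G t x' y : EReal) ≤ ⨆ y'' : Y, (G t x' y'' : EReal) := le_iSup (fun y'' : Y => (G t x' y'' : EReal)) y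
        _ = g t := hx'
    have h2 : g 0 ≤ (G 0 x' y : EReal) := by
      calc g 0 = h 0 := hh0.symm
        _ = ⨅ x'' : X, (G 0 x'' y : EReal) := hy.symm
        _ ≤ (G 0 x' y : EReal) := iInf_le _ x'
    have h1' : G t x' y ≤ (g t).toReal := by
      have := EReal.toReal_le_toReal h1 (EReal.coe_ne_bot _) hgtop
      simpa using this
    have h2' : (g 0).toReal ≤ G 0 x' y := by
      have := EReal.toReal_le_toReal h2 hg0bot (EReal.coe_ne_top _)
      simpa using this
    linarith
  -- quotient bounds
  have qub : ∀ x ∈ Xt 0, ∀ t ∈ Ioc (0:ℝ) ε, ∀ y' ∈ Yt t,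
      ∃ τ ∈ Ioo (0:ℝ) t, q t ≤ Gt τ x y' := by
    intro x hx t ht y' hy'
    obtain ⟨τ, hτ, heq⟩ := mvt t ht x y'
    refine ⟨τ, hτ, ?_⟩
    have h1 := key_upper x hx t ht y' hy'
    rw [hq]
    rw [div_le_iff₀ ht.1]
    calc (g t).toReal - (g 0).toReal ≤ G t x y' - G 0 x y' := h1
      _ = Gt τ x y' * t := heq
  have qlb : ∀ y ∈ Yt 0, ∀ t ∈ Ioc (0:ℝ) ε, ∀ x' ∈ Xt t,
      ∃ τ ∈ Ioo (0:ℝ) t, Gt τ x' y ≤ q t := by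
    intro y hy t ht x' hx'
    obtain ⟨τ, hτ, heq⟩ := mvt t ht x' y
    refine ⟨τ, hτ, ?_⟩
    have h1 := key_lower y hy t ht x' hx'
    rw [hq]
    rw [le_div_iff₀ ht.1]
    calc Gt τ x' y * t = G t x' y - G 0 x' y := heq.symm
      _ ≤ (g t).toReal - (g 0).toReal := h1
  -- sequence upper bound via (H4)
  have KU : ∀ tn : ℕ → ℝ, (∀ n, tn n ∈ Ioc 0 ε) → Tendsto tn atTop (nhds 0) →
      ∃ φ : ℕ → ℕ, StrictMono φ ∧ ∃ y0 ∈ Yt 0,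
        ∀ x ∈ Xt 0, ∀ η > (0:ℝ), ∃ N, ∀ k, N < k → q (tn (φ k)) ≤ Gt 0 x y0 + η := by
    intro tn htn htn0
    obtain ⟨φ, hφ, y0, hy0, yk, hyk, hjoint⟩ := H4 tn htn htn0
    refine ⟨φ, hφ, y0, hy0, ?_⟩
    intro x hx η hη
    obtain ⟨δ, hδ, N, hN⟩ := hjoint x hx η hη
    have hφ0 : Tendsto (fun k => tn (φ k)) atTop (nhds 0) := htn0.comp hφ.tendsto_atTop
    obtain ⟨M, hM⟩ := eventually_atTop.mp (hφ0.eventually (gt_mem_nhds hδ))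
    refine ⟨max N M, ?_⟩
    intro k hk
    have hkN : N < k := lt_of_le_of_lt (le_max_left _ _) hk
    have hkM : M ≤ k := le_of_lt (lt_of_le_of_lt (le_max_right _ _) hk)
    obtain ⟨τ, hτ, hqle⟩ := qub x hx (tn (φ k)) (htn (φ k)) (yk k) (hyk k)
    have hτδ : τ < δ := hτ.2.trans (hM k hkM)
    have habs := abs_lt.mp (hN τ k hτ.1 hτδ hkN)
    linarith [hqle]
  -- sequence lower bound via (H3)
  have KL : ∀ tn : ℕ → ℝ, (∀ n, tn n ∈ Ioc 0 ε) → Tendsto tn atTop (nhds 0) →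
      ∃ φ : ℕ → ℕ, StrictMono φ ∧ ∃ x0 ∈ Xt 0,
        ∀ y ∈ Yt 0, ∀ η > (0:ℝ), ∃ N, ∀ k, N < k → Gt 0 x0 y - η ≤ q (tn (φ k)) := by
    intro tn htn htn0
    obtain ⟨φ, hφ, x0, hx0, xk, hxk, hjoint⟩ := H3 tn htn htn0
    refine ⟨φ, hφ, x0, hx0, ?_⟩
    intro y hy η hη
    obtain ⟨δ, hδ, N, hN⟩ := hjoint y hy η hη
    have hφ0 : Tendsto (fun k => tn (φ k)) atTop (nhds 0) := htn0.comp hφ.tendsto_atTop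
    obtain ⟨M, hM⟩ := eventually_atTop.mp (hφ0.eventually (gt_mem_nhds hδ))
    refine ⟨max N M, ?_⟩
    intro k hk
    have hkN : N < k := lt_of_le_of_lt (le_max_left _ _) hk
    have hkM : M ≤ k := le_of_lt (lt_of_le_of_lt (le_max_right _ _) hk)
    obtain ⟨τ, hτ, hqle⟩ := qlb y hy (tn (φ k)) (htn (φ k)) (xk k) (hxk k)
    have hτδ : τ < δ := hτ.2.trans (hM k hkM)
    have habs := abs_lt.mp (hN τ k hτ.1 hτδ hkN)
    linarith [hqle]
  -- eventually small
  have evsmall : ∀ d > (0:ℝ), ∀ᶠ t in F, t ∈ Ioc (0:ℝ) ε ∧ t < d := by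
    intro d hd
    exact eventually_mem_nhdsWithin.and
      (Filter.Eventually.filter_mono nhdsWithin_le_nhds (gt_mem_nhds hd))
  -- boundedness above
  have bdd_above : ∃ C, ∀ᶠ t in F, q t ≤ C := by
    by_contra hcon
    push_neg at hcon
    have hfreq : ∀ n : ℕ, ∃ t, (t ∈ Ioc (0:ℝ) ε ∧ t < 1/((n:ℝ)+1)) ∧ (n:ℝ) < q t := by
      intro n
      have h2 : ∃ᶠ t in F, ¬ q t ≤ (n:ℝ) := not_eventually.mp (fun hev => hcon n (hev.mono fun x hx => not_lt.mpr hx))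
      obtain ⟨t, hnt, hts⟩ := (h2.and_eventually (evsmall (1/((n:ℝ)+1)) (by positivity))).exists
      exact ⟨t, hts, not_le.mp hnt⟩
    choose tn htn hbig using hfreq
    have htn0 : Tendsto tn atTop (nhds 0) := by
      apply squeeze_zero (fun n => (htn n).1.1.le) (fun n => ((htn n).2).le)
        tendsto_one_div_add_atTop_nhds_zero_nat
    obtain ⟨φ, hφ, y0, hy0, hprop⟩ := KU tn (fun n => (htn n).1) htn0
    obtain ⟨N, hN⟩ := hprop xbar hxbar 1 one_pos
    set k := max (N+1) (⌈Gt 0 xbar y0 + 1⌉₊ + 1) with hk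
    have hkN : N < k := lt_of_lt_of_le (Nat.lt_succ_self N) (le_max_left _ _)
    have h1 := hN k hkN
    have h2 := hbig (φ k)
    have h3 : (k:ℝ) ≤ (φ k : ℝ) := Nat.cast_le.mpr hφ.le_apply
    have h4 : Gt 0 xbar y0 + 1 < (k:ℝ) := by
      have : Gt 0 xbar y0 + 1 ≤ (⌈Gt 0 xbar y0 + 1⌉₊ : ℝ) := Nat.le_ceil _
      have hk2 : (⌈Gt 0 xbar y0 + 1⌉₊ + 1 : ℕ) ≤ k := le_max_right _ _
      have := (Nat.cast_le (α := ℝ)).mpr hk2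
      push_cast at this
      linarith
    linarith
  -- boundedness below
  have bdd_below : ∃ C, ∀ᶠ t in F, C ≤ q t := by
    by_contra hcon
    push_neg at hcon
    have hfreq : ∀ n : ℕ, ∃ t, (t ∈ Ioc (0:ℝ) ε ∧ t < 1/((n:ℝ)+1)) ∧ q t < -(n:ℝ) := by
      intro n
      have h2 : ∃ᶠ t in F, ¬ (-(n:ℝ)) ≤ q t := not_eventually.mp (fun hev => hcon (-(n:ℝ)) (hev.mono fun x hx => not_lt.mpr hx))
      obtain ⟨t, hnt, hts⟩ := (h2.and_eventually (evsmall (1/((n:ℝ)+1)) (by positivity))).exists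
      exact ⟨t, hts, not_le.mp hnt⟩
    choose tn htn hbig using hfreq
    have htn0 : Tendsto tn atTop (nhds 0) := by
      apply squeeze_zero (fun n => (htn n).1.1.le) (fun n => ((htn n).2).le)
        tendsto_one_div_add_atTop_nhds_zero_nat
    obtain ⟨φ, hφ, x0, hx0, hprop⟩ := KL tn (fun n => (htn n).1) htn0
    obtain ⟨N, hN⟩ := hprop ybar hybar 1 one_pos
    set k := max (N+1) (⌈-(Gt 0 x0 ybar - 1)⌉₊ + 1) with hk
    have hkN : N < k := lt_of_lt_of_le (Nat.lt_succ_self N) (le_max_left _ _)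
    have h1 := hN k hkN
    have h2 := hbig (φ k)
    have h3 : (k:ℝ) ≤ (φ k : ℝ) := Nat.cast_le.mpr hφ.le_apply
    have h4 : -(Gt 0 x0 ybar - 1) < (k:ℝ) := by
      have : -(Gt 0 x0 ybar - 1) ≤ (⌈-(Gt 0 x0 ybar - 1)⌉₊ : ℝ) := Nat.le_ceil _
      have hk2 : (⌈-(Gt 0 x0 ybar - 1)⌉₊ + 1 : ℕ) ≤ k := le_max_right _ _
      have := (Nat.cast_le (α := ℝ)).mpr hk2
      push_cast at this
      linarith
    linarith
  obtain ⟨CU, hCU⟩ := bdd_above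
  obtain ⟨CL, hCL⟩ := bdd_below
  have hbddU : IsBoundedUnder (· ≤ ·) F q := ⟨CU, eventually_map.mpr hCU⟩
  have hbddL : IsBoundedUnder (· ≥ ·) F q := ⟨CL, eventually_map.mpr hCL⟩
  set A := limsup q F with hA
  set B := liminf q F with hB
  -- a sequence almost attaining the limsup
  have freqA : ∀ n : ℕ, ∃ t, (t ∈ Ioc (0:ℝ) ε ∧ t < 1/((n:ℝ)+1)) ∧ A - 1/((n:ℝ)+1) < q t := by
    intro n
    have hne : ¬ ∀ᶠ t in F, q t ≤ A - 1/((n:ℝ)+1) := by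
      intro hev
      have hle := limsup_le_of_le hbddL.isCoboundedUnder_le hev
      have : (0:ℝ) < 1/((n:ℝ)+1) := by positivity
      rw [← hA] at hle
      linarith
    obtain ⟨t, hnt, hts⟩ :=
      ((not_eventually.mp hne).and_eventually (evsmall (1/((n:ℝ)+1)) (by positivity))).exists
    exact ⟨t, hts, not_le.mp hnt⟩
  have freqB : ∀ n : ℕ, ∃ t, (t ∈ Ioc (0:ℝ) ε ∧ t < 1/((n:ℝ)+1)) ∧ q t < B + 1/((n:ℝ)+1) := by
    intro n
    have hne : ¬ ∀ᶠ t in F, B + 1/((n:ℝ)+1) ≤ q t := by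
      intro hev
      have hle := le_liminf_of_le hbddU.isCoboundedUnder_ge hev
      have : (0:ℝ) < 1/((n:ℝ)+1) := by positivity
      rw [← hB] at hle
      linarith
    obtain ⟨t, hnt, hts⟩ :=
      ((not_eventually.mp hne).and_eventually (evsmall (1/((n:ℝ)+1)) (by positivity))).exists
    exact ⟨t, hts, not_le.mp hnt⟩
  choose tnA htnA hAbig using freqA
  choose tnB htnB hBsmall using freqB
  have htnA0 : Tendsto tnA atTop (nhds 0) :=
    squeeze_zero (fun n => (htnA n).1.1.le) (fun n => ((htnA n).2).le)
      tendsto_one_div_add_atTop_nhds_zero_nat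
  have htnB0 : Tendsto tnB atTop (nhds 0) :=
    squeeze_zero (fun n => (htnB n).1.1.le) (fun n => ((htnB n).2).le)
      tendsto_one_div_add_atTop_nhds_zero_nat
  obtain ⟨φA, hφA, y0, hy0, hpropA⟩ := KU tnA (fun n => (htnA n).1) htnA0
  obtain ⟨φB, hφB, x0, hx0, hpropB⟩ := KL tnB (fun n => (htnB n).1) htnB0
  have hAle : ∀ x ∈ Xt 0, A ≤ Gt 0 x y0 := by
    intro x hx
    refine le_of_forall_pos_le_add ?_
    intro η hη
    obtain ⟨N, hN⟩ := hpropA x hx (η/2) (by positivity)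
    obtain ⟨K, hK⟩ := exists_nat_one_div_lt (show (0:ℝ) < η/2 by positivity)
    set k := max (N+1) K with hkdef
    have hkN : N < k := lt_of_lt_of_le (Nat.lt_succ_self N) (le_max_left _ _)
    have h1 := hN k hkN
    have h2 := hAbig (φA k)
    have h3 : 1/((φA k : ℝ)+1) ≤ 1/((K:ℝ)+1) := by
      apply one_div_le_one_div_of_le (by positivity)
      have : K ≤ φA k := le_trans (le_max_right _ _) hφA.le_apply
      have := (Nat.cast_le (α := ℝ)).mpr this
      linarith
    linarith
  have hBle : ∀ y ∈ Yt 0, Gt 0 x0 y ≤ B := by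
    intro y hy
    refine le_of_forall_pos_le_add ?_
    intro η hη
    obtain ⟨N, hN⟩ := hpropB y hy (η/2) (by positivity)
    obtain ⟨K, hK⟩ := exists_nat_one_div_lt (show (0:ℝ) < η/2 by positivity)
    set k := max (N+1) K with hkdef
    have hkN : N < k := lt_of_lt_of_le (Nat.lt_succ_self N) (le_max_left _ _)
    have h1 := hN k hkN
    have h2 := hBsmall (φB k)
    have h3 : 1/((φB k : ℝ)+1) ≤ 1/((K:ℝ)+1) := by
      apply one_div_le_one_div_of_le (by positivity)
      have : K ≤ φB k := le_trans (le_max_right _ _) hφB.le_apply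
      have := (Nat.cast_le (α := ℝ)).mpr this
      linarith
    linarith
  have hBA : B ≤ A := liminf_le_limsup hbddU hbddL
  have h1 : A ≤ Gt 0 x0 y0 := hAle x0 hx0
  have h2 : Gt 0 x0 y0 ≤ B := hBle y0 hy0
  exact ⟨x0, hx0, y0, hy0,
    tendsto_of_le_liminf_of_limsup_le h2 h1 hbddU hbddL⟩
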